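/- arXiv:2303.08971 — 2 statements merged into one kernel-verified Lean document; each statement's English description precedes it below -/
import Mathlib

section
/- Let k ≥ 2 and p ≥ 0 be integers. If there exists x ∈ LS+^p(H_k) with ∑_{v ∈ [k]_0 ∪ [k]_2} (k−1) x_v + ∑_{v ∈ [k]_1} (k−2) x_v > k(k−1), then there exist real numbers a, b such that w_k(a,b) ∈ LS+^p(H_k) and 2k(k−1)a + k(k−2)b > k(k−1). -/
open Finset

noncomputable section

/-- `cone(P)`: the homogenization of `P`, indexed by `Option V` with `none` playing
the role of the `0` coordinate. -/
def lsCone {V : Type*} (P : Set (V → ℝ)) : Set (Option V → ℝ) :=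
  {y | ∃ (lam : ℝ) (x : V → ℝ), 0 ≤ lam ∧ x ∈ P ∧
    y = fun o => o.elim lam (fun v => lam * x v)}

/-- The lift `LŜ₊(P)`: symmetric PSD matrices `Y` indexed by `Option V`
with `Y e₀ = diag Y` and all columns conditions. -/
def lsLift {V : Type*} [Fintype V] [DecidableEq V] (P : Set (V → ℝ)) :
    Set (Matrix (Option V) (Option V) ℝ) :=
  {Y | Y.PosSemidef ∧ Y.mulVec (Pi.single none 1) = Matrix.diag Y ∧
      ∀ v : V, Y.mulVec (Pi.single (some v) 1) ∈ lsCone P ∧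
        Y.mulVec (Pi.single none 1 - Pi.single (some v) 1) ∈ lsCone P}

/-- The Lovász–Schrijver operator `LS₊`. -/
def lsPlus {V : Type*} [Fintype V] [DecidableEq V] (P : Set (V → ℝ)) : Set (V → ℝ) :=
  {x | ∃ Y ∈ lsLift P, Y.mulVec (Pi.single none 1) = fun o => o.elim 1 x}

/-- The fractional stable set polytope. -/
def FRAC {V : Type*} (G : SimpleGraph V) : Set (V → ℝ) :=
  {x | (∀ v, 0 ≤ x v ∧ x v ≤ 1) ∧ ∀ u v, G.Adj u v → x u + x v ≤ 1}

/-- The stable set polytope: convex hull of incidence vectors of stable sets. -/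
def STAB {V : Type*} (G : SimpleGraph V) : Set (V → ℝ) :=
  convexHull ℝ {x | ∃ S : Set V, (∀ u ∈ S, ∀ v ∈ S, ¬ G.Adj u v) ∧
    x = S.indicator fun _ => (1 : ℝ)}

/-- The graph `H_k`, on vertex set `Fin k × Fin 3` (vertex `i_p` is `(i, p)`). -/
def Hgraph (k : ℕ) : SimpleGraph (Fin k × Fin 3) :=
  SimpleGraph.fromRel (fun a b =>
    (a.1 = b.1 ∧ ((a.2 = 0 ∧ b.2 = 1) ∨ (a.2 = 1 ∧ b.2 = 2))) ∨
    (a.1 ≠ b.1 ∧ a.2 = 0 ∧ b.2 = 2))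

/-- The vector `w_k(a,b)`: entry `a` on `[k]₀ ∪ [k]₂` and `b` on `[k]₁`. -/
def wVec (k : ℕ) (a b : ℝ) : Fin k × Fin 3 → ℝ := fun v => if v.2 = 1 then b else a

section Convexity

variable {V : Type*} [Fintype V] [DecidableEq V]

lemma lsCone_combo {P : Set (V → ℝ)} (hP : Convex ℝ P) {a b : ℝ} (ha : 0 ≤ a) (hb : 0 ≤ b)
    {y z : Option V → ℝ} (hy : y ∈ lsCone P) (hz : z ∈ lsCone P) :
    a • y + b • z ∈ lsCone P := by
  obtain ⟨l1, x1, hl1, hx1, rfl⟩ := hy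
  obtain ⟨l2, x2, hl2, hx2, rfl⟩ := hz
  by_cases hL : a * l1 + b * l2 = 0
  · have h1 : a * l1 = 0 := by nlinarith [mul_nonneg ha hl1, mul_nonneg hb hl2]
    have h2 : b * l2 = 0 := by nlinarith [mul_nonneg ha hl1, mul_nonneg hb hl2]
    refine ⟨0, x1, le_refl _, hx1, funext fun o => ?_⟩
    cases o with
    | none => simpa using hL
    | some v =>
        have : a * (l1 * x1 v) + b * (l2 * x2 v) = 0 := by
          have e1 : a * (l1 * x1 v) = (a * l1) * x1 v := by ring
          have e2 : b * (l2 * x2 v) = (b * l2) * x2 v := by ring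
          rw [e1, e2, h1, h2]; ring
        simpa using this
  · have hLpos : 0 < a * l1 + b * l2 :=
      lt_of_le_of_ne (by positivity) (Ne.symm hL)
    set L := a * l1 + b * l2 with hLdef
    refine ⟨L, (a * l1 / L) • x1 + (b * l2 / L) • x2, le_of_lt hLpos,
      hP hx1 hx2 (by positivity) (by positivity) (by field_simp; exact hLdef.symm), funext fun o => ?_⟩
    cases o with
    | none => simp; exact hLdef.symm
    | some v =>
        show a * (l1 * x1 v) + b * (l2 * x2 v) = L * ((a * l1 / L) * x1 v + (b * l2 / L) * x2 v)
        field_simp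

lemma posSemidef_smul {M : Matrix (Option V) (Option V) ℝ} (h : M.PosSemidef) {c : ℝ}
    (hc : 0 ≤ c) : (c • M).PosSemidef := by
  refine ⟨?_, fun x => ?_⟩
  · have h1 := h.1
    rw [Matrix.IsHermitian] at h1 ⊢
    rw [Matrix.conjTranspose_smul, h1, star_trivial]
  · exact (h.smul hc).2 x

lemma lsPlus_convex {P : Set (V → ℝ)} (hP : Convex ℝ P) : Convex ℝ (lsPlus P) := by
  rintro x1 ⟨Y1, ⟨hpsd1, hd1, hcol1⟩, he1⟩ x2 ⟨Y2, ⟨hpsd2, hd2, hcol2⟩, he2⟩ a b ha hb hab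
  have hmv : ∀ u : Option V → ℝ, (a • Y1 + b • Y2).mulVec u
      = a • Y1.mulVec u + b • Y2.mulVec u := by
    intro u
    rw [Matrix.add_mulVec, Matrix.smul_mulVec, Matrix.smul_mulVec]
  refine ⟨a • Y1 + b • Y2, ⟨⟨(posSemidef_smul hpsd1 ha).add (posSemidef_smul hpsd2 hb), ?_, fun v => ⟨?_, ?_⟩⟩, ?_⟩⟩
  · rw [hmv, hd1, hd2]
    funext o
    simp [Matrix.diag]
  · rw [hmv]
    exact lsCone_combo hP ha hb (hcol1 v).1 (hcol2 v).1
  · rw [hmv]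
    exact lsCone_combo hP ha hb (hcol1 v).2 (hcol2 v).2
  · rw [hmv, he1, he2]
    funext o
    cases o with
    | none => simpa using hab
    | some v => simp [Pi.smul_apply]

lemma FRAC_convex {G : SimpleGraph V} : Convex ℝ (FRAC G) := by
  rintro x ⟨hx1, hx2⟩ y ⟨hy1, hy2⟩ a b ha hb hab
  refine ⟨fun v => ?_, fun u v huv => ?_⟩ <;>
    simp only [Pi.add_apply, Pi.smul_apply, smul_eq_mul]
  · constructor
    · nlinarith [(hx1 v).1, (hy1 v).1]
    · nlinarith [mul_le_mul_of_nonneg_left (hx1 v).2 ha,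
        mul_le_mul_of_nonneg_left (hy1 v).2 hb]
  · nlinarith [mul_le_mul_of_nonneg_left (hx2 u v huv) ha,
      mul_le_mul_of_nonneg_left (hy2 u v huv) hb]

lemma iter_convex {G : SimpleGraph V} (p : ℕ) :
    Convex ℝ ((lsPlus (V := V))^[p] (FRAC G)) := by
  induction p with
  | zero => exact FRAC_convex
  | succ n ih => rw [Function.iterate_succ_apply']; exact lsPlus_convex ih

end Convexity

section Equivariance

variable {V : Type*} [Fintype V] [DecidableEq V]

lemma lsCone_comp {P : Set (V → ℝ)} (e : V ≃ V) (hP : ∀ x ∈ P, x ∘ ⇑e ∈ P)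
    {y : Option V → ℝ} (hy : y ∈ lsCone P) : y ∘ ⇑(Equiv.optionCongr e) ∈ lsCone P := by
  obtain ⟨l, x, hl, hx, rfl⟩ := hy
  refine ⟨l, x ∘ ⇑e, hl, hP x hx, funext fun o => ?_⟩
  cases o <;> simp

lemma lsPlus_comp {P : Set (V → ℝ)} (e : V ≃ V) (hP : ∀ x ∈ P, x ∘ ⇑e ∈ P)
    {x : V → ℝ} (hx : x ∈ lsPlus P) : x ∘ ⇑e ∈ lsPlus P := by
  obtain ⟨Y, ⟨hpsd, hdiag, hcol⟩, hY⟩ := hx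
  set oe : Option V ≃ Option V := Equiv.optionCongr e with hoe
  have hmv : ∀ u : Option V → ℝ,
      (Y.submatrix ⇑oe ⇑oe).mulVec u = fun o => Y.mulVec (u ∘ ⇑oe.symm) (oe o) := by
    intro u
    funext o
    simp only [Matrix.mulVec, dotProduct, Matrix.submatrix_apply, Function.comp]
    exact Fintype.sum_equiv oe _ _ (fun j => by simp)
  have hnone : (Pi.single (M := fun _ : Option V => ℝ) none 1) ∘ ⇑oe.symm
      = Pi.single none 1 := by
    funext j
    simp only [Function.comp, Pi.single_apply]
    congr 1
    simp [eq_iff_iff, Equiv.symm_apply_eq, hoe]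
  have hsome : ∀ v : V, (Pi.single (M := fun _ : Option V => ℝ) (some v) 1) ∘ ⇑oe.symm
      = Pi.single (some (e v)) 1 := by
    intro v
    funext j
    simp only [Function.comp, Pi.single_apply]
    congr 1
    simp [eq_iff_iff, Equiv.symm_apply_eq, hoe]
  refine ⟨Y.submatrix ⇑oe ⇑oe, ⟨hpsd.submatrix _, ?_, fun v => ⟨?_, ?_⟩⟩, ?_⟩
  · rw [hmv, hnone]
    funext o
    rw [hdiag]
    rfl
  · rw [hmv, hsome v]
    exact lsCone_comp e hP (hcol (e v)).1
  · have : (Pi.single (M := fun _ : Option V => ℝ) none 1 - Pi.single (some v) 1) ∘ ⇑oe.symm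
        = Pi.single none 1 - Pi.single (some (e v)) 1 := by
      funext j
      simp only [Function.comp, Pi.sub_apply]
      rw [← Function.comp_apply (g := ⇑oe.symm) (f := Pi.single none 1),
        ← Function.comp_apply (g := ⇑oe.symm) (f := Pi.single (some v) 1), hnone, hsome v]
    rw [hmv, this]
    exact lsCone_comp e hP (hcol (e v)).2
  · rw [hmv, hnone, hY]
    funext o
    cases o <;> simp [hoe]

lemma iter_comp {G : SimpleGraph V} (e : V ≃ V)
    (he : ∀ u v, G.Adj u v → G.Adj (e u) (e v)) (p : ℕ)
    {x : V → ℝ} (hx : x ∈ (lsPlus (V := V))^[p] (FRAC G)) :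
    x ∘ ⇑e ∈ (lsPlus (V := V))^[p] (FRAC G) := by
  induction p generalizing x with
  | zero =>
      obtain ⟨h1, h2⟩ := hx
      exact ⟨fun v => h1 (e v), fun u v huv => h2 (e u) (e v) (he u v huv)⟩
  | succ n ih =>
      rw [Function.iterate_succ_apply'] at hx ⊢
      exact lsPlus_comp e (fun z hz => ih hz) hx

end Equivariance

section Hsym

lemma tr_adj {k : ℕ} [NeZero k] (c : Fin k) {u v : Fin k × Fin 3}
    (h : (Hgraph k).Adj u v) :
    (Hgraph k).Adj ((Equiv.prodCongr (Equiv.addRight c) (Equiv.refl (Fin 3))) u)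
      ((Equiv.prodCongr (Equiv.addRight c) (Equiv.refl (Fin 3))) v) := by
  rw [Hgraph, SimpleGraph.fromRel_adj] at h ⊢
  obtain ⟨hne, hr⟩ := h
  have key : ∀ a b : Fin k, a + c = b + c ↔ a = b := fun a b => add_left_injective c |>.eq_iff
  refine ⟨fun hcon => hne ?_, ?_⟩
  · rw [Prod.ext_iff] at hcon ⊢
    simp only [Equiv.prodCongr_apply, Equiv.coe_refl, Prod.map_fst, Prod.map_snd, id_eq,
      Equiv.coe_addRight, key] at hcon
    exact hcon
  · simp only [Equiv.prodCongr_apply, Equiv.coe_refl, Prod.map_fst, Prod.map_snd, id_eq,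
      Equiv.coe_addRight, ne_eq, key]
    exact hr

lemma sw_adj {k : ℕ} {u v : Fin k × Fin 3} (h : (Hgraph k).Adj u v) :
    (Hgraph k).Adj ((Equiv.prodCongr (Equiv.refl (Fin k)) (Equiv.swap (0:Fin 3) 2)) u)
      ((Equiv.prodCongr (Equiv.refl (Fin k)) (Equiv.swap (0:Fin 3) 2)) v) := by
  have s0 : Equiv.swap (0:Fin 3) 2 0 = 2 := Equiv.swap_apply_left 0 2
  have s1 : Equiv.swap (0:Fin 3) 2 1 = 1 := by decide
  have s2 : Equiv.swap (0:Fin 3) 2 2 = 0 := Equiv.swap_apply_right 0 2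
  rw [Hgraph, SimpleGraph.fromRel_adj] at h ⊢
  obtain ⟨hne, hr⟩ := h
  refine ⟨fun hcon => hne ?_, ?_⟩
  · rw [Prod.ext_iff] at hcon ⊢
    simp only [Equiv.prodCongr_apply, Equiv.coe_refl, Prod.map_fst, Prod.map_snd, id_eq] at hcon
    exact ⟨hcon.1, (Equiv.swap (0:Fin 3) 2).injective hcon.2⟩
  · simp only [Equiv.prodCongr_apply, Equiv.coe_refl, Prod.map_fst, Prod.map_snd, id_eq, ne_eq]
    rcases hr with (⟨h1, (⟨h2, h3⟩ | ⟨h2, h3⟩)⟩ | ⟨h1, h2, h3⟩) |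
      (⟨h1, (⟨h2, h3⟩ | ⟨h2, h3⟩)⟩ | ⟨h1, h2, h3⟩)
    · exact Or.inr (Or.inl ⟨h1.symm, Or.inr ⟨by rw [h3, s1], by rw [h2, s0]⟩⟩)
    · exact Or.inr (Or.inl ⟨h1.symm, Or.inl ⟨by rw [h3, s2], by rw [h2, s1]⟩⟩)
    · exact Or.inr (Or.inr ⟨Ne.symm h1, by rw [h3, s2], by rw [h2, s0]⟩)
    · exact Or.inl (Or.inl ⟨h1.symm, Or.inr ⟨by rw [h3, s1], by rw [h2, s0]⟩⟩)
    · exact Or.inl (Or.inl ⟨h1.symm, Or.inl ⟨by rw [h3, s2], by rw [h2, s1]⟩⟩)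
    · exact Or.inl (Or.inr ⟨Ne.symm h1, by rw [h3, s2], by rw [h2, s0]⟩)

end Hsym

theorem Hk_symmetrize_violation (k : ℕ) (hk : 2 ≤ k) (p : ℕ)
    (x : Fin k × Fin 3 → ℝ)
    (hx : x ∈ (lsPlus (V := Fin k × Fin 3))^[p] (FRAC (Hgraph k)))
    (hviol : (k : ℝ) * ((k : ℝ) - 1) <
      ∑ v : Fin k × Fin 3, (if v.2 = 1 then (k : ℝ) - 2 else (k : ℝ) - 1) * x v) :
    ∃ a b : ℝ, wVec k a b ∈ (lsPlus (V := Fin k × Fin 3))^[p] (FRAC (Hgraph k)) ∧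
      (k : ℝ) * ((k : ℝ) - 1) < 2 * k * ((k : ℝ) - 1) * a + (k : ℝ) * ((k : ℝ) - 2) * b := by
  haveI : NeZero k := ⟨by omega⟩
  have hk0 : (0 : ℝ) < (k : ℝ) := by
    have : (2 : ℝ) ≤ (k : ℝ) := by exact_mod_cast hk
    linarith
  have s0 : Equiv.swap (0:Fin 3) 2 0 = 2 := Equiv.swap_apply_left 0 2
  have s1 : Equiv.swap (0:Fin 3) 2 1 = 1 := by decide
  have s2 : Equiv.swap (0:Fin 3) 2 2 = 0 := Equiv.swap_apply_right 0 2
  set sw : Fin k × Fin 3 ≃ Fin k × Fin 3 :=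
    Equiv.prodCongr (Equiv.refl (Fin k)) (Equiv.swap (0:Fin 3) 2) with hswdef
  have hxsw : x ∘ ⇑sw ∈ (lsPlus (V := Fin k × Fin 3))^[p] (FRAC (Hgraph k)) :=
    iter_comp sw (fun u v h => sw_adj h) p hx
  set z : Fin k × Bool → (Fin k × Fin 3 → ℝ) := fun cs =>
    (cond cs.2 (x ∘ ⇑sw) x) ∘
      ⇑(Equiv.prodCongr (Equiv.addRight cs.1) (Equiv.refl (Fin 3))) with hzdef
  have hzC : ∀ cs : Fin k × Bool,
      z cs ∈ (lsPlus (V := Fin k × Fin 3))^[p] (FRAC (Hgraph k)) := by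
    rintro ⟨c, s⟩
    cases s
    · exact iter_comp _ (fun u v h => tr_adj c h) p hx
    · exact iter_comp _ (fun u v h => tr_adj c h) p hxsw
  set S0 : ℝ := ∑ j : Fin k, x (j, 0) with hS0
  set S1 : ℝ := ∑ j : Fin k, x (j, 1) with hS1
  set S2 : ℝ := ∑ j : Fin k, x (j, 2) with hS2
  set a : ℝ := (S0 + S2) / (2 * k) with ha
  set b : ℝ := S1 / k with hb
  have reidx : ∀ (i : Fin k) (t : Fin 3),
      ∑ c : Fin k, x (i + c, t) = ∑ j : Fin k, x (j, t) := by
    intro i t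
    exact Fintype.sum_equiv (Equiv.addLeft i) _ _ (fun c => by simp)
  have hsum : ∑ cs : Fin k × Bool, ((2 * (k : ℝ))⁻¹) • z cs = wVec k a b := by
    funext v
    rcases v with ⟨i, q⟩
    rw [Finset.sum_apply]
    have hz' : ∀ cs : Fin k × Bool, ((2 * (k : ℝ))⁻¹ • z cs) (i, q)
        = (2 * (k : ℝ))⁻¹ * (cond cs.2 (x (i + cs.1, Equiv.swap (0:Fin 3) 2 q))
            (x (i + cs.1, q))) := by
      rintro ⟨c, s⟩
      cases s <;> simp [hzdef, hswdef]
    simp only [hz']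
    rw [Fintype.sum_prod_type]
    simp only [Fintype.sum_bool, cond_true, cond_false]
    rw [Finset.sum_add_distrib, ← Finset.mul_sum, ← Finset.mul_sum, reidx, reidx]
    rcases (by decide : ∀ r : Fin 3, r = 0 ∨ r = 1 ∨ r = 2) q with rfl | rfl | rfl
    · rw [s0]
      show (2 * (k : ℝ))⁻¹ * S2 + (2 * (k : ℝ))⁻¹ * S0 = wVec k a b (i, 0)
      show (2 * (k : ℝ))⁻¹ * S2 + (2 * (k : ℝ))⁻¹ * S0 = if (0 : Fin 3) = 1 then b else a
      rw [if_neg (by decide), ha]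
      field_simp
      all_goals ring
    · rw [s1]
      show (2 * (k : ℝ))⁻¹ * S1 + (2 * (k : ℝ))⁻¹ * S1 = if (1 : Fin 3) = 1 then b else a
      rw [if_pos rfl, hb]
      field_simp
      all_goals ring
    · rw [s2]
      show (2 * (k : ℝ))⁻¹ * S0 + (2 * (k : ℝ))⁻¹ * S2 = if (2 : Fin 3) = 1 then b else a
      rw [if_neg (by decide), ha]
      field_simp
      all_goals ring
  have hmem : wVec k a b ∈ (lsPlus (V := Fin k × Fin 3))^[p] (FRAC (Hgraph k)) := by
    rw [← hsum]
    refine (iter_convex p).sum_mem (fun i _ => by positivity) ?_ (fun i _ => hzC i)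
    rw [Finset.sum_const]
    simp only [Finset.card_univ, Fintype.card_prod, Fintype.card_fin, Fintype.card_bool,
      nsmul_eq_mul]
    push_cast
    field_simp
  have hsplit : ∑ v : Fin k × Fin 3, (if v.2 = 1 then (k : ℝ) - 2 else (k : ℝ) - 1) * x v
      = ((k : ℝ) - 1) * S0 + ((k : ℝ) - 2) * S1 + ((k : ℝ) - 1) * S2 := by
    have e0 : (if (0 : Fin 3) = 1 then (k : ℝ) - 2 else (k : ℝ) - 1) = (k : ℝ) - 1 :=
      if_neg (by decide)
    have e1 : (if (1 : Fin 3) = 1 then (k : ℝ) - 2 else (k : ℝ) - 1) = (k : ℝ) - 2 :=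
      if_pos rfl
    have e2 : (if (2 : Fin 3) = 1 then (k : ℝ) - 2 else (k : ℝ) - 1) = (k : ℝ) - 1 :=
      if_neg (by decide)
    rw [Fintype.sum_prod_type]
    simp only [Fin.sum_univ_three, e0, e1, e2]
    rw [Finset.sum_add_distrib, Finset.sum_add_distrib]
    rw [← Finset.mul_sum, ← Finset.mul_sum, ← Finset.mul_sum, ← hS0, ← hS1, ← hS2]
    simp
  refine ⟨a, b, hmem, ?_⟩
  have hval : 2 * (k : ℝ) * ((k : ℝ) - 1) * a + (k : ℝ) * ((k : ℝ) - 2) * b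
      = ((k : ℝ) - 1) * S0 + ((k : ℝ) - 2) * S1 + ((k : ℝ) - 1) * S2 := by
    rw [ha, hb]
    field_simp
    ring
  rw [hval, ← hsplit]
  exact hviol
end
end

section
/- For every integer k ≥ 2, Φ(STAB(H_k)) = conv({(0,0), (1/2, 0), (1/k, (k−1)/k), (0,1)}). -/
open Finset

noncomputable section

lemma fin3_cases (p : Fin 3) : p = 0 ∨ p = 1 ∨ p = 2 := by revert p; decide

lemma stab_le {V : Type*} [Fintype V] {G : SimpleGraph V} (c : V → ℝ) (γ : ℝ)
    (h : ∀ S : Set V, (∀ u ∈ S, ∀ v ∈ S, ¬ G.Adj u v) →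
      ∑ v, c v * S.indicator (fun _ => (1:ℝ)) v ≤ γ) :
    ∀ x ∈ STAB G, ∑ v, c v * x v ≤ γ := by
  intro x hx
  have hconv : Convex ℝ {x : V → ℝ | ∑ v, c v * x v ≤ γ} := by
    apply convex_halfSpace_le (f := fun x : V → ℝ => ∑ v, c v * x v) _ γ
    constructor
    · intro a b; simp [mul_add, Finset.sum_add_distrib]
    · intro r a; simp [Finset.mul_sum, mul_left_comm]
  refine convexHull_min ?_ hconv hx
  rintro y ⟨S, hS, rfl⟩
  exact h S hS

lemma stab_nonneg {V : Type*} {G : SimpleGraph V} {x : V → ℝ} (hx : x ∈ STAB G) (v : V) :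
    0 ≤ x v := by
  have hconv : Convex ℝ {x : V → ℝ | 0 ≤ x v} := by
    apply convex_halfSpace_ge (f := fun x : V → ℝ => x v) ⟨fun a b => rfl, fun c a => by simp⟩ 0
  refine convexHull_min ?_ hconv hx
  rintro y ⟨S, hS, rfl⟩
  by_cases hv : v ∈ S <;> simp [Set.indicator_apply, hv]

lemma stab_edge {V : Type*} {G : SimpleGraph V} {x : V → ℝ} (hx : x ∈ STAB G)
    {u v : V} (huv : G.Adj u v) : x u + x v ≤ 1 := by
  have hconv : Convex ℝ {x : V → ℝ | x u + x v ≤ 1} := by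
    apply convex_halfSpace_le (f := fun x : V → ℝ => x u + x v)
      ⟨fun a b => by simp; ring, fun c a => by simp; ring⟩ 1
  refine convexHull_min ?_ hconv hx
  rintro y ⟨S, hS, rfl⟩
  by_cases hu : u ∈ S
  · have hvn : v ∉ S := fun hv => hS u hu v hv huv
    simp [Set.indicator_apply, hu, hvn]
  · by_cases hv : v ∈ S <;> simp [Set.indicator_apply, hu, hv]

lemma stable_key (k : ℕ) (hk : 2 ≤ k) (S : Set (Fin k × Fin 3))
    (hS : ∀ u ∈ S, ∀ v ∈ S, ¬ (Hgraph k).Adj u v) :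
    ∑ v : Fin k × Fin 3, (if v.2 = 1 then ((k:ℝ)-2) else ((k:ℝ)-1)) *
      S.indicator (fun _ => (1:ℝ)) v ≤ (k:ℝ)*((k:ℝ)-1) := by
  classical
  -- adjacency helpers
  have hadj : ∀ u v : Fin k × Fin 3, u ∈ S → v ∈ S →
      ¬ (u ≠ v ∧ (((u.1 = v.1 ∧ ((u.2 = 0 ∧ v.2 = 1) ∨ (u.2 = 1 ∧ v.2 = 2))) ∨
      (u.1 ≠ v.1 ∧ u.2 = 0 ∧ v.2 = 2)) ∨ ((v.1 = u.1 ∧ ((v.2 = 0 ∧ u.2 = 1) ∨ (v.2 = 1 ∧ u.2 = 2))) ∨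
      (v.1 ≠ u.1 ∧ v.2 = 0 ∧ u.2 = 2)))) := by
    intro u v hu hv h
    exact hS u hu v hv ((SimpleGraph.fromRel_adj _ u v).2 h)
  set F : Finset (Fin k × Fin 3) := univ.filter (· ∈ S) with hF
  set A : Finset (Fin k × Fin 3) := F.filter (fun v => v.2 = 0) with hA
  set B : Finset (Fin k × Fin 3) := F.filter (fun v => v.2 = 1) with hB
  set C : Finset (Fin k × Fin 3) := F.filter (fun v => v.2 = 2) with hC
  have hmemF : ∀ v, v ∈ F ↔ v ∈ S := by intro v; simp [hF]
  -- rewrite the sum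
  have hsum : ∑ v : Fin k × Fin 3, (if v.2 = 1 then ((k:ℝ)-2) else ((k:ℝ)-1)) *
      S.indicator (fun _ => (1:ℝ)) v
      = ((k:ℝ)-2) * B.card + ((k:ℝ)-1) * (A.card + C.card) := by
    have h1 : ∀ v : Fin k × Fin 3, (if v.2 = 1 then ((k:ℝ)-2) else ((k:ℝ)-1)) *
        S.indicator (fun _ => (1:ℝ)) v
        = if v ∈ F then (if v.2 = 1 then ((k:ℝ)-2) else ((k:ℝ)-1)) else 0 := by
      intro v
      by_cases hv : v ∈ S <;> simp [Set.indicator_apply, hv, hmemF]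
    rw [Finset.sum_congr rfl (fun v _ => h1 v), Finset.sum_ite_mem, univ_inter]
    have hpart : F = A ∪ B ∪ C := by
      ext v
      simp only [hA, hB, hC, Finset.mem_union, Finset.mem_filter]
      rcases fin3_cases v.2 with h | h | h <;> simp [h] <;> tauto
    have hdAB : Disjoint A B := by
      rw [Finset.disjoint_left]; intro v hva hvb
      simp only [hA, hB, Finset.mem_filter] at hva hvb
      rw [hva.2] at hvb; exact absurd hvb.2 (by decide)
    have hdABC : Disjoint (A ∪ B) C := by
      rw [Finset.disjoint_left]; intro v hvab hvc
      simp only [hA, hB, hC, Finset.mem_union, Finset.mem_filter] at hvab hvc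
      rcases hvab with h | h <;> rw [hvc.2] at h <;> exact absurd h.2 (by decide)
    rw [hpart, Finset.sum_union hdABC, Finset.sum_union hdAB]
    have sA : ∑ v ∈ A, (if v.2 = 1 then ((k:ℝ)-2) else ((k:ℝ)-1)) = ((k:ℝ)-1) * A.card := by
      rw [Finset.sum_congr rfl (fun v hv => ?_), Finset.sum_const, nsmul_eq_mul, mul_comm]
      simp only [hA, Finset.mem_filter] at hv
      rw [hv.2]; norm_num
    have sB : ∑ v ∈ B, (if v.2 = 1 then ((k:ℝ)-2) else ((k:ℝ)-1)) = ((k:ℝ)-2) * B.card := by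
      rw [Finset.sum_congr rfl (fun v hv => ?_), Finset.sum_const, nsmul_eq_mul, mul_comm]
      simp only [hB, Finset.mem_filter] at hv
      rw [hv.2]; norm_num
    have sC : ∑ v ∈ C, (if v.2 = 1 then ((k:ℝ)-2) else ((k:ℝ)-1)) = ((k:ℝ)-1) * C.card := by
      rw [Finset.sum_congr rfl (fun v hv => ?_), Finset.sum_const, nsmul_eq_mul, mul_comm]
      simp only [hC, Finset.mem_filter] at hv
      rw [hv.2, if_neg (by decide)]
    rw [sA, sB, sC]; ring
  rw [hsum]
  -- now the combinatorial bounds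
  by_cases hAC : A.Nonempty ∧ C.Nonempty
  · obtain ⟨⟨a, ha⟩, ⟨c, hc⟩⟩ := hAC
    simp only [hA, hC, Finset.mem_filter] at ha hc
    have haS := (hmemF a).1 ha.1
    have hcS := (hmemF c).1 hc.1
    -- a.1 = c.1
    have hac : ∀ a' ∈ A, a'.1 = c.1 := by
      intro a' ha'
      simp only [hA, Finset.mem_filter] at ha'
      by_contra hne
      exact hadj a' c ((hmemF a').1 ha'.1) hcS
        ⟨by rintro rfl; rw [ha'.2] at hc; exact absurd hc.2 (by decide),
          Or.inl (Or.inr ⟨hne, ha'.2, hc.2⟩)⟩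
    have hca : ∀ c' ∈ C, c'.1 = a.1 := by
      intro c' hc'
      simp only [hC, Finset.mem_filter] at hc'
      by_contra hne
      exact hadj a c' haS ((hmemF c').1 hc'.1)
        ⟨by rintro rfl; rw [ha.2] at hc'; exact absurd hc'.2 (by decide),
          Or.inl (Or.inr ⟨fun h => hne h.symm, ha.2, hc'.2⟩)⟩
    have hA1 : A.card ≤ 1 := by
      refine Finset.card_le_one.2 (fun x hx y hy => ?_)
      have hx2 : x.2 = 0 := (Finset.mem_filter.1 hx).2
      have hy2 : y.2 = 0 := (Finset.mem_filter.1 hy).2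
      exact Prod.ext ((hac x hx).trans (hac y hy).symm) (hx2.trans hy2.symm)
    have hC1 : C.card ≤ 1 := by
      refine Finset.card_le_one.2 (fun x hx y hy => ?_)
      have hx2 : x.2 = 2 := (Finset.mem_filter.1 hx).2
      have hy2 : y.2 = 2 := (Finset.mem_filter.1 hy).2
      exact Prod.ext ((hca x hx).trans (hca y hy).symm) (hx2.trans hy2.symm)
    -- B avoids a.1 : b ∈ B has b.1 ≠ a.1
    have hBa : ∀ b ∈ B, b.1 ≠ a.1 := by
      intro b hb
      simp only [hB, Finset.mem_filter] at hb
      intro heq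
      exact hadj a b haS ((hmemF b).1 hb.1)
        ⟨by rintro rfl; rw [ha.2] at hb; exact absurd hb.2 (by decide),
          Or.inl (Or.inl ⟨heq.symm, Or.inl ⟨ha.2, hb.2⟩⟩)⟩
    have hBcard : B.card ≤ k - 1 := by
      have : B.card ≤ (univ.erase a.1 : Finset (Fin k)).card := by
        apply Finset.card_le_card_of_injOn Prod.fst
        · intro b hb; exact Finset.mem_erase.2 ⟨hBa b hb, Finset.mem_univ _⟩
        · intro x hx y hy hxy
          have hx2 : x.2 = 1 := (Finset.mem_filter.1 hx).2
          have hy2 : y.2 = 1 := (Finset.mem_filter.1 hy).2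
          exact Prod.ext hxy (hx2.trans hy2.symm)
      rwa [Finset.card_erase_of_mem (Finset.mem_univ _), Finset.card_univ, Fintype.card_fin] at this
    have hBk : (B.card : ℝ) ≤ (k:ℝ) - 1 := by
      have : (B.card : ℝ) ≤ ((k - 1 : ℕ) : ℝ) := Nat.cast_le.2 hBcard
      rwa [Nat.cast_sub (by omega), Nat.cast_one] at this
    have hA1' : (A.card : ℝ) ≤ 1 := by exact_mod_cast hA1
    have hC1' : (C.card : ℝ) ≤ 1 := by exact_mod_cast hC1
    have hk2 : (2:ℝ) ≤ (k:ℝ) := by exact_mod_cast hk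
    nlinarith [hBk, hA1', hC1']
  · -- one of A, C is empty
    have hABk : A.card + B.card ≤ k ∧ B.card + C.card ≤ k := by
      constructor
      · have : (A ∪ B).card ≤ (univ : Finset (Fin k)).card := by
          apply Finset.card_le_card_of_injOn Prod.fst (fun _ _ => Finset.mem_univ _)
          intro x hx y hy hxy
          simp only [Finset.coe_union, Set.mem_union, Finset.mem_coe, hA, hB,
            Finset.mem_filter] at hx hy
          rcases hx with hx | hx <;> rcases hy with hy | hy
          · exact Prod.ext hxy (hx.2.trans hy.2.symm)
          · exfalso
            exact hadj x y ((hmemF x).1 hx.1) ((hmemF y).1 hy.1)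
              ⟨by rintro rfl; rw [hx.2] at hy; exact absurd hy.2 (by decide),
                Or.inl (Or.inl ⟨hxy, Or.inl ⟨hx.2, hy.2⟩⟩)⟩
          · exfalso
            exact hadj y x ((hmemF y).1 hy.1) ((hmemF x).1 hx.1)
              ⟨by rintro rfl; rw [hx.2] at hy; exact absurd hy.2 (by decide),
                Or.inl (Or.inl ⟨hxy.symm, Or.inl ⟨hy.2, hx.2⟩⟩)⟩
          · exact Prod.ext hxy (hx.2.trans hy.2.symm)
        rw [Finset.card_union_of_disjoint, Finset.card_univ, Fintype.card_fin] at this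
        · exact this
        · rw [Finset.disjoint_left]; intro v hva hvb
          have h1 := (Finset.mem_filter.1 hva).2
          have h2 := (Finset.mem_filter.1 hvb).2
          rw [h1] at h2; exact absurd h2 (by decide)
      · have : (B ∪ C).card ≤ (univ : Finset (Fin k)).card := by
          apply Finset.card_le_card_of_injOn Prod.fst (fun _ _ => Finset.mem_univ _)
          intro x hx y hy hxy
          simp only [Finset.coe_union, Set.mem_union, Finset.mem_coe, hB, hC,
            Finset.mem_filter] at hx hy
          rcases hx with hx | hx <;> rcases hy with hy | hy
          · exact Prod.ext hxy (hx.2.trans hy.2.symm)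
          · exfalso
            exact hadj x y ((hmemF x).1 hx.1) ((hmemF y).1 hy.1)
              ⟨by rintro rfl; rw [hx.2] at hy; exact absurd hy.2 (by decide),
                Or.inl (Or.inl ⟨hxy, Or.inr ⟨hx.2, hy.2⟩⟩)⟩
          · exfalso
            exact hadj y x ((hmemF y).1 hy.1) ((hmemF x).1 hx.1)
              ⟨by rintro rfl; rw [hx.2] at hy; exact absurd hy.2 (by decide),
                Or.inl (Or.inl ⟨hxy.symm, Or.inr ⟨hy.2, hx.2⟩⟩)⟩
          · exact Prod.ext hxy (hx.2.trans hy.2.symm)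
        rw [Finset.card_union_of_disjoint, Finset.card_univ, Fintype.card_fin] at this
        · exact this
        · rw [Finset.disjoint_left]; intro v hva hvb
          have h1 := (Finset.mem_filter.1 hva).2
          have h2 := (Finset.mem_filter.1 hvb).2
          rw [h1] at h2; exact absurd h2 (by decide)
    have hk2 : (2:ℝ) ≤ (k:ℝ) := by exact_mod_cast hk
    rw [not_and_or] at hAC
    rcases hAC with h | h
    · have hA0 : A.card = 0 := by
        rw [Finset.not_nonempty_iff_eq_empty] at h; rw [h, Finset.card_empty]
      have h2 : (B.card : ℝ) + (C.card : ℝ) ≤ (k:ℝ) := by exact_mod_cast hABk.2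
      have hBnn : (0:ℝ) ≤ (B.card : ℝ) := Nat.cast_nonneg _
      rw [hA0]
      push_cast
      nlinarith
    · have hC0 : C.card = 0 := by
        rw [Finset.not_nonempty_iff_eq_empty] at h; rw [h, Finset.card_empty]
      have h2 : (A.card : ℝ) + (B.card : ℝ) ≤ (k:ℝ) := by exact_mod_cast hABk.1
      have hBnn : (0:ℝ) ≤ (B.card : ℝ) := Nat.cast_nonneg _
      rw [hC0]
      push_cast
      nlinarith

-- point 1 : (0,0)
lemma mem1 (k : ℕ) : wVec k 0 0 ∈ STAB (Hgraph k) := by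
  apply subset_convexHull
  refine ⟨∅, by simp, ?_⟩
  funext v
  simp [wVec]

-- point 4 : (0,1)
lemma mem4 (k : ℕ) : wVec k 0 1 ∈ STAB (Hgraph k) := by
  apply subset_convexHull
  refine ⟨{v | v.2 = 1}, ?_, ?_⟩
  · rintro u hu v hv hadj
    rw [Hgraph, SimpleGraph.fromRel_adj] at hadj
    simp only [Set.mem_setOf_eq] at hu hv
    obtain ⟨-, h | h⟩ := hadj <;>
      rcases h with ⟨-, ⟨h1, h2⟩ | ⟨h1, h2⟩⟩ | ⟨-, h1, h2⟩ <;> simp_all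
  · funext v
    by_cases hv : v.2 = 1 <;> simp [wVec, Set.indicator_apply, hv]

-- point 2 : (1/2, 0)
lemma mem2 (k : ℕ) : wVec k (1/2) 0 ∈ STAB (Hgraph k) := by
  have h0 : ((fun v : Fin k × Fin 3 => v.2 = 0) : _ → Prop) = (fun v => v.2 = 0) := rfl
  have m0 : ({v : Fin k × Fin 3 | v.2 = 0}.indicator fun _ => (1:ℝ)) ∈
      {x | ∃ S : Set (Fin k × Fin 3), (∀ u ∈ S, ∀ v ∈ S, ¬ (Hgraph k).Adj u v) ∧
        x = S.indicator fun _ => (1 : ℝ)} := by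
    refine ⟨_, ?_, rfl⟩
    rintro u hu v hv hadj
    rw [Hgraph, SimpleGraph.fromRel_adj] at hadj
    simp only [Set.mem_setOf_eq] at hu hv
    obtain ⟨-, h | h⟩ := hadj <;>
      rcases h with ⟨-, ⟨h1, h2⟩ | ⟨h1, h2⟩⟩ | ⟨-, h1, h2⟩ <;> simp_all
  have m2 : ({v : Fin k × Fin 3 | v.2 = 2}.indicator fun _ => (1:ℝ)) ∈
      {x | ∃ S : Set (Fin k × Fin 3), (∀ u ∈ S, ∀ v ∈ S, ¬ (Hgraph k).Adj u v) ∧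
        x = S.indicator fun _ => (1 : ℝ)} := by
    refine ⟨_, ?_, rfl⟩
    rintro u hu v hv hadj
    rw [Hgraph, SimpleGraph.fromRel_adj] at hadj
    simp only [Set.mem_setOf_eq] at hu hv
    obtain ⟨-, h | h⟩ := hadj <;>
      rcases h with ⟨-, ⟨h1, h2⟩ | ⟨h1, h2⟩⟩ | ⟨-, h1, h2⟩ <;> simp_all
  have := (convex_convexHull ℝ _) (subset_convexHull ℝ _ m0) (subset_convexHull ℝ _ m2)
    (by norm_num : (0:ℝ) ≤ 1/2) (by norm_num : (0:ℝ) ≤ 1/2) (by norm_num)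
  convert this using 1
  · rfl
  funext v
  rcases fin3_cases v.2 with h | h | h <;>
    simp [wVec, Set.indicator_apply, h, Pi.add_apply] <;> norm_num

-- point 3 : (1/k, (k-1)/k)
lemma mem3 (k : ℕ) (hk : 2 ≤ k) :
    wVec k (1/(k:ℝ)) (((k:ℝ)-1)/(k:ℝ)) ∈ STAB (Hgraph k) := by
  classical
  have hk0 : (0:ℝ) < (k:ℝ) := by
    have : 0 < k := by omega
    exact_mod_cast this
  set z : Fin k → (Fin k × Fin 3) → ℝ :=
    fun i => ({v : Fin k × Fin 3 | if v.2 = 1 then v.1 ≠ i else v.1 = i}.indicator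
      fun _ => (1:ℝ)) with hz
  have hzmem : ∀ i, z i ∈ {x | ∃ S : Set (Fin k × Fin 3),
      (∀ u ∈ S, ∀ v ∈ S, ¬ (Hgraph k).Adj u v) ∧ x = S.indicator fun _ => (1 : ℝ)} := by
    intro i
    refine ⟨_, ?_, rfl⟩
    rintro u hu v hv hadj
    rw [Hgraph, SimpleGraph.fromRel_adj] at hadj
    simp only [Set.mem_setOf_eq] at hu hv
    obtain ⟨hne, h | h⟩ := hadj <;>
      rcases h with ⟨heq, ⟨h1, h2⟩ | ⟨h1, h2⟩⟩ | ⟨hne1, h1, h2⟩ <;> simp_all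
  have hcm : (univ : Finset (Fin k)).centerMass (fun _ => (1:ℝ)) z ∈
      convexHull ℝ {x | ∃ S : Set (Fin k × Fin 3),
      (∀ u ∈ S, ∀ v ∈ S, ¬ (Hgraph k).Adj u v) ∧ x = S.indicator fun _ => (1 : ℝ)} := by
    apply Finset.centerMass_mem_convexHull _ (fun i _ => zero_le_one) _ (fun i _ => hzmem i)
    simpa using hk0
  have heq : (univ : Finset (Fin k)).centerMass (fun _ => (1:ℝ)) z
      = wVec k (1/(k:ℝ)) (((k:ℝ)-1)/(k:ℝ)) := by
    rw [Finset.centerMass]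
    simp only [Finset.sum_const, Finset.card_univ, Fintype.card_fin, nsmul_eq_mul, mul_one,
      one_smul]
    funext v
    rw [Pi.smul_apply, Finset.sum_apply]
    have hzv : ∀ i, z i v = if (if v.2 = 1 then v.1 ≠ i else v.1 = i) then (1:ℝ) else 0 := by
      intro i
      simp [hz, Set.indicator_apply]
    rw [Finset.sum_congr rfl (fun i _ => hzv i)]
    by_cases hv : v.2 = 1
    · simp only [hv, if_true, wVec]
      have : ∑ i : Fin k, (if ¬ v.1 = i then (1:ℝ) else 0) = (k:ℝ) - 1 := by
        rw [Finset.sum_ite, Finset.sum_const, Finset.sum_const]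
        simp [Finset.filter_ne, Finset.filter_eq]
        rw [Nat.cast_sub (by omega)]
        simp
      simp only [ne_eq]
      rw [this, smul_eq_mul]
      field_simp
    · simp only [hv, if_false, wVec]
      rw [Finset.sum_ite_eq univ v.1 (fun _ => (1:ℝ))]
      simp [hv]
  rw [← heq]
  exact hcm

lemma sum_wVec (k : ℕ) (a b : ℝ) :
    ∑ v : Fin k × Fin 3, (if v.2 = 1 then ((k:ℝ)-2) else ((k:ℝ)-1)) * wVec k a b v
      = (k:ℝ) * (2*((k:ℝ)-1)*a + ((k:ℝ)-2)*b) := by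
  rw [Fintype.sum_prod_type]
  have : ∀ i : Fin k, ∑ p : Fin 3,
      (if ((i,p) : Fin k × Fin 3).2 = 1 then ((k:ℝ)-2) else ((k:ℝ)-1)) * wVec k a b (i,p)
      = 2*((k:ℝ)-1)*a + ((k:ℝ)-2)*b := by
    intro i
    rw [Fin.sum_univ_three]
    simp [wVec]
    ring
  rw [Finset.sum_congr rfl (fun i _ => this i), Finset.sum_const, Finset.card_univ,
    Fintype.card_fin, nsmul_eq_mul]

lemma combo3_mem {s : Set (ℝ×ℝ)} {p₁ p₂ p₃ : ℝ×ℝ} (h₁ : p₁ ∈ s) (h₂ : p₂ ∈ s) (h₃ : p₃ ∈ s)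
    {a b c : ℝ} (ha : 0 ≤ a) (hb : 0 ≤ b) (hc : 0 ≤ c) (habc : a + b + c = 1) :
    a • p₁ + b • p₂ + c • p₃ ∈ convexHull ℝ s := by
  have := Finset.centerMass_mem_convexHull (univ : Finset (Fin 3))
    (w := ![a, b, c]) (z := ![p₁, p₂, p₃])
    (by intro i _; fin_cases i <;> simpa)
    (by rw [Fin.sum_univ_three]; simp; linarith)
    (by intro i _; fin_cases i <;> simpa)
  rw [Finset.centerMass, Fin.sum_univ_three, Fin.sum_univ_three] at this
  simp only [Matrix.cons_val_zero, Matrix.cons_val_one, Matrix.head_cons,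
    Matrix.cons_val_two, Matrix.tail_cons] at this
  rw [habc, inv_one, one_smul] at this
  exact this

theorem Hk_Phi_STAB (k : ℕ) (hk : 2 ≤ k) :
    {q : ℝ × ℝ | wVec k q.1 q.2 ∈ STAB (Hgraph k)} =
      convexHull ℝ {((0 : ℝ), (0 : ℝ)), (1 / 2, 0), (1 / (k : ℝ), ((k : ℝ) - 1) / (k : ℝ)),
        (0, 1)} := by
  have hK2 : (2:ℝ) ≤ (k:ℝ) := by exact_mod_cast hk
  have hK0 : (0:ℝ) < (k:ℝ) := by linarith
  have hK1 : (0:ℝ) < (k:ℝ) - 1 := by linarith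
  have hKne : (k:ℝ) ≠ 0 := ne_of_gt hK0
  have hK1ne : (k:ℝ) - 1 ≠ 0 := ne_of_gt hK1
  have hp1 : ((0:ℝ),(0:ℝ)) ∈ ({((0 : ℝ), (0 : ℝ)), (1 / 2, 0),
      (1 / (k : ℝ), ((k : ℝ) - 1) / (k : ℝ)), (0, 1)} : Set (ℝ×ℝ)) := by simp
  have hp2 : ((1/2 : ℝ),(0:ℝ)) ∈ ({((0 : ℝ), (0 : ℝ)), (1 / 2, 0),
      (1 / (k : ℝ), ((k : ℝ) - 1) / (k : ℝ)), (0, 1)} : Set (ℝ×ℝ)) := by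
    right; left; rfl
  have hp3 : ((1/(k:ℝ)), ((k:ℝ)-1)/(k:ℝ)) ∈ ({((0 : ℝ), (0 : ℝ)), (1 / 2, 0),
      (1 / (k : ℝ), ((k : ℝ) - 1) / (k : ℝ)), (0, 1)} : Set (ℝ×ℝ)) := by
    right; right; left; rfl
  have hp4 : ((0:ℝ),(1:ℝ)) ∈ ({((0 : ℝ), (0 : ℝ)), (1 / 2, 0),
      (1 / (k : ℝ), ((k : ℝ) - 1) / (k : ℝ)), (0, 1)} : Set (ℝ×ℝ)) := by
    right; right; right; rfl
  apply Set.Subset.antisymm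
  · intro q hq
    simp only [Set.mem_setOf_eq] at hq
    have ha : 0 ≤ q.1 := by
      have := stab_nonneg hq (⟨0, by omega⟩, 0)
      simpa [wVec] using this
    have hb : 0 ≤ q.2 := by
      have := stab_nonneg hq (⟨0, by omega⟩, 1)
      simpa [wVec] using this
    have hab : q.1 + q.2 ≤ 1 := by
      have hadj : (Hgraph k).Adj (⟨0, by omega⟩, 0) (⟨0, by omega⟩, 1) := by
        rw [Hgraph, SimpleGraph.fromRel_adj]
        exact ⟨by simp, Or.inl (Or.inl ⟨rfl, Or.inl ⟨rfl, rfl⟩⟩)⟩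
      have := stab_edge hq hadj
      simpa [wVec] using this
    have hkey : 2*((k:ℝ)-1)*q.1 + ((k:ℝ)-2)*q.2 ≤ (k:ℝ) - 1 := by
      have h1 := stab_le (fun v : Fin k × Fin 3 => if v.2 = 1 then ((k:ℝ)-2) else ((k:ℝ)-1))
        ((k:ℝ)*((k:ℝ)-1)) (fun S hS => stable_key k hk S hS) _ hq
      rw [sum_wVec] at h1
      exact le_of_mul_le_mul_left h1 hK0
    rcases le_or_gt q.2 (((k:ℝ)-1)*q.1) with hcase | hcase
    · -- triangle (0,0), (1/2,0), (1/k,(k-1)/k)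
      have hl2 : 0 ≤ (2*((k:ℝ)-1)*q.1 - 2*q.2)/((k:ℝ)-1) :=
        div_nonneg (by linarith) (le_of_lt hK1)
      have hl3 : 0 ≤ (k:ℝ)*q.2/((k:ℝ)-1) :=
        div_nonneg (mul_nonneg (le_of_lt hK0) hb) (le_of_lt hK1)
      have hsumle : (2*((k:ℝ)-1)*q.1 - 2*q.2)/((k:ℝ)-1) + (k:ℝ)*q.2/((k:ℝ)-1) ≤ 1 := by
        rw [← add_div, div_le_one hK1]; linarith
      have hl1 : 0 ≤ 1 - (2*((k:ℝ)-1)*q.1 - 2*q.2)/((k:ℝ)-1) - (k:ℝ)*q.2/((k:ℝ)-1) := by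
        linarith
      have hqeq : q = (1 - (2*((k:ℝ)-1)*q.1 - 2*q.2)/((k:ℝ)-1) - (k:ℝ)*q.2/((k:ℝ)-1)) •
            ((0:ℝ),(0:ℝ)) +
          ((2*((k:ℝ)-1)*q.1 - 2*q.2)/((k:ℝ)-1)) • ((1/2 : ℝ),(0:ℝ)) +
          ((k:ℝ)*q.2/((k:ℝ)-1)) • ((1/(k:ℝ)), ((k:ℝ)-1)/(k:ℝ)) := by
        apply Prod.ext
        · simp only [Prod.smul_mk, Prod.mk_add_mk, smul_eq_mul]
          field_simp
          ring
        · simp only [Prod.smul_mk, Prod.mk_add_mk, smul_eq_mul]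
          field_simp
          ring
      rw [hqeq]
      exact combo3_mem hp1 hp2 hp3 hl1 hl2 hl3 (by ring)
    · -- triangle (0,0), (1/k,(k-1)/k), (0,1)
      have hl2 : 0 ≤ (k:ℝ)*q.1 := mul_nonneg (le_of_lt hK0) ha
      have hl3 : 0 ≤ q.2 - ((k:ℝ)-1)*q.1 := by linarith
      have hl1 : 0 ≤ 1 - (k:ℝ)*q.1 - (q.2 - ((k:ℝ)-1)*q.1) := by linarith
      have hqeq : q = (1 - (k:ℝ)*q.1 - (q.2 - ((k:ℝ)-1)*q.1)) • ((0:ℝ),(0:ℝ)) +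
          ((k:ℝ)*q.1) • ((1/(k:ℝ)), ((k:ℝ)-1)/(k:ℝ)) +
          (q.2 - ((k:ℝ)-1)*q.1) • ((0:ℝ),(1:ℝ)) := by
        apply Prod.ext
        · simp only [Prod.smul_mk, Prod.mk_add_mk, smul_eq_mul]
          field_simp
          ring
        · simp only [Prod.smul_mk, Prod.mk_add_mk, smul_eq_mul]
          field_simp
          ring
      rw [hqeq]
      exact combo3_mem hp1 hp3 hp4 hl1 hl2 hl3 (by ring)
  · apply convexHull_min
    · intro p hp
      simp only [Set.mem_insert_iff, Set.mem_singleton_iff] at hp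
      rcases hp with rfl | rfl | rfl | rfl
      · exact mem1 k
      · exact mem2 k
      · exact mem3 k hk
      · exact mem4 k
    · intro q1 hq1 q2 hq2 u v hu hv huv
      simp only [Set.mem_setOf_eq] at hq1 hq2 ⊢
      have hw : wVec k (u • q1 + v • q2).1 (u • q1 + v • q2).2 =
          u • wVec k q1.1 q1.2 + v • wVec k q2.1 q2.2 := by
        funext w
        by_cases hw2 : w.2 = 1 <;> simp [wVec, hw2]
      rw [hw]
      exact (convex_convexHull ℝ _) hq1 hq2 hu hv huv
end
end
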